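/- Let X, Y be nonnegative random variables with 0 < E[X] < ∞ and g(t) = P(Y < t < X+Y)/E[X]. Then for every s > 0, the Laplace transform of g satisfies L_g(s) = (L_Y(s) - L_{X+Y}(s))/(s·E[X]), where L_Y(s) = E[e^{-sY}] and L_{X+Y}(s) = E[e^{-s(X+Y)}]. -/

import Mathlib

open MeasureTheory Set
open scoped ENNReal

lemma exp_ioo_integral (s a b : ℝ) (hs : 0 < s) (hab : a ≤ b) :
    ∫ t in Ioo a b, Real.exp (-s * t) =
      (Real.exp (-s * a) - Real.exp (-s * b)) / s := by
  rw [← integral_Ioc_eq_integral_Ioo, ← intervalIntegral.integral_of_le hab,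
    intervalIntegral.integral_comp_mul_left (fun u => Real.exp u) (c := -s) (by linarith),
    integral_exp, smul_eq_mul, eq_div_iff hs.ne']
  field_simp [hs.ne']
  ring

theorem generation_time_laplace
    {Ω : Type*} [MeasurableSpace Ω] (μ : Measure Ω) [IsProbabilityMeasure μ]
    (X Y : Ω → ℝ) (hX : Measurable X) (hY : Measurable Y)
    (hXpos : ∀ ω, 0 ≤ X ω) (hYpos : ∀ ω, 0 ≤ Y ω)
    (hXint : Integrable X μ) (hEX : 0 < ∫ ω, X ω ∂μ)
    (g : ℝ → ℝ)
    (hg : ∀ t, g t = (μ {ω | Y ω < t ∧ t < X ω + Y ω}).toReal / ∫ ω, X ω ∂μ) :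
    ∀ s : ℝ, 0 < s →
      ∫ t in Ioi (0:ℝ), Real.exp (-s * t) * g t =
        ((∫ ω, Real.exp (-s * Y ω) ∂μ) - ∫ ω, Real.exp (-s * (X ω + Y ω)) ∂μ) /
          (s * ∫ ω, X ω ∂μ) := by
  intro s hs
  set E := ∫ ω, X ω ∂μ with hE
  set S : Set (Ω × ℝ) := {p | Y p.1 < p.2 ∧ p.2 < X p.1 + Y p.1} with hSdef
  have hS : MeasurableSet S := by
    apply MeasurableSet.inter
    · exact measurableSet_lt (hY.comp measurable_fst) measurable_snd
    · exact measurableSet_lt measurable_snd ((hX.comp measurable_fst).add (hY.comp measurable_fst))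
  set ν := volume.restrict (Ioi (0:ℝ)) with hν
  set F : Ω × ℝ → ℝ≥0∞ := S.indicator (fun p => ENNReal.ofReal (Real.exp (-s * p.2))) with hFdef
  have hF : Measurable F := by
    apply Measurable.indicator _ hS
    exact ENNReal.measurable_ofReal.comp (Real.measurable_exp.comp (measurable_snd.const_mul (-s)))
  have hsecm : ∀ t : ℝ, MeasurableSet {ω | Y ω < t ∧ t < X ω + Y ω} := by
    intro t
    exact (measurableSet_lt hY measurable_const).inter
      (measurableSet_lt measurable_const (hX.add hY))
  have hsec : ∀ t : ℝ, ∫⁻ ω, F (ω, t) ∂μ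
      = ENNReal.ofReal (Real.exp (-s * t)) * μ {ω | Y ω < t ∧ t < X ω + Y ω} := by
    intro t
    have h1 : ∀ ω, F (ω, t) = ({ω | Y ω < t ∧ t < X ω + Y ω}).indicator
        (fun _ => ENNReal.ofReal (Real.exp (-s * t))) ω := by
      intro ω
      by_cases h : Y ω < t ∧ t < X ω + Y ω <;>
        simp [hFdef, hSdef, Set.indicator, h]
    simp_rw [h1]
    rw [lintegral_indicator (hsecm t), setLIntegral_const]
  have hωside : ∀ ω, ∫⁻ t, F (ω, t) ∂ν
      = ENNReal.ofReal ((Real.exp (-s * Y ω) - Real.exp (-s * (X ω + Y ω))) / s) := by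
    intro ω
    have h1 : ∀ t, F (ω, t) = (Ioo (Y ω) (X ω + Y ω)).indicator
        (fun t => ENNReal.ofReal (Real.exp (-s * t))) t := by
      intro t
      by_cases h : Y ω < t ∧ t < X ω + Y ω <;>
        simp [hFdef, hSdef, Set.indicator, h, Set.mem_Ioo]
    have hsub : Ioo (Y ω) (X ω + Y ω) ⊆ Ioi (0:ℝ) :=
      Set.Ioo_subset_Ioi_self.trans (Set.Ioi_subset_Ioi (hYpos ω))
    have hab : Y ω ≤ X ω + Y ω := by linarith [hXpos ω]
    have hcont : Continuous fun t : ℝ => Real.exp (-s * t) := by continuity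
    have hint : IntegrableOn (fun t : ℝ => Real.exp (-s * t)) (Ioo (Y ω) (X ω + Y ω)) volume :=
      (hcont.integrableOn_Icc).mono_set Set.Ioo_subset_Icc_self
    simp_rw [h1]
    rw [lintegral_indicator measurableSet_Ioo, hν,
      Measure.restrict_restrict measurableSet_Ioo, Set.inter_eq_left.mpr hsub,
      ← ofReal_integral_eq_lintegral_ofReal hint
        (Filter.Eventually.of_forall fun t => (Real.exp_pos _).le),
      exp_ioo_integral s _ _ hs hab]
  have key : (∫⁻ t in Ioi (0:ℝ),
        ENNReal.ofReal (Real.exp (-s * t)) * μ {ω | Y ω < t ∧ t < X ω + Y ω})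
      = ∫⁻ ω, ENNReal.ofReal ((Real.exp (-s * Y ω) - Real.exp (-s * (X ω + Y ω))) / s) ∂μ := by
    calc ∫⁻ t in Ioi (0:ℝ),
          ENNReal.ofReal (Real.exp (-s * t)) * μ {ω | Y ω < t ∧ t < X ω + Y ω}
        = ∫⁻ t, ∫⁻ ω, F (ω, t) ∂μ ∂ν := by rw [hν]; exact lintegral_congr fun t => (hsec t).symm
      _ = ∫⁻ p, F p ∂(μ.prod ν) := (lintegral_prod_symm F hF.aemeasurable).symm
      _ = ∫⁻ ω, ∫⁻ t, F (ω, t) ∂ν ∂μ := lintegral_prod F hF.aemeasurable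
      _ = _ := lintegral_congr fun ω => hωside ω
  -- integrability of the exponentials
  have hm1 : Measurable fun ω => Real.exp (-s * Y ω) :=
    Real.measurable_exp.comp (hY.const_mul (-s))
  have hm2 : Measurable fun ω => Real.exp (-s * (X ω + Y ω)) :=
    Real.measurable_exp.comp ((hX.add hY).const_mul (-s))
  have hb1 : Integrable (fun ω => Real.exp (-s * Y ω)) μ := by
    apply (integrable_const (1:ℝ)).mono' hm1.aestronglyMeasurable
    filter_upwards with ω
    rw [Real.norm_eq_abs, abs_of_pos (Real.exp_pos _)]
    apply Real.exp_le_one_iff.mpr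
    nlinarith [hYpos ω]
  have hb2 : Integrable (fun ω => Real.exp (-s * (X ω + Y ω))) μ := by
    apply (integrable_const (1:ℝ)).mono' hm2.aestronglyMeasurable
    filter_upwards with ω
    rw [Real.norm_eq_abs, abs_of_pos (Real.exp_pos _)]
    apply Real.exp_le_one_iff.mpr
    nlinarith [hXpos ω, hYpos ω]
  have hrhs : (∫⁻ ω, ENNReal.ofReal
        ((Real.exp (-s * Y ω) - Real.exp (-s * (X ω + Y ω))) / s) ∂μ).toReal
      = ((∫ ω, Real.exp (-s * Y ω) ∂μ) - ∫ ω, Real.exp (-s * (X ω + Y ω)) ∂μ) / s := by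
    have hnn : 0 ≤ᵐ[μ] fun ω => (Real.exp (-s * Y ω) - Real.exp (-s * (X ω + Y ω))) / s := by
      filter_upwards with ω
      have h1 : Real.exp (-s * (X ω + Y ω)) ≤ Real.exp (-s * Y ω) := by
        apply Real.exp_le_exp.mpr
        nlinarith [hXpos ω]
      exact div_nonneg (by linarith) hs.le
    rw [← integral_eq_lintegral_of_nonneg_ae hnn
        ((hm1.sub hm2).div_const s).aestronglyMeasurable,
      integral_div, integral_sub hb1 hb2]
  have hmt : Measurable fun t => μ {ω | Y ω < t ∧ t < X ω + Y ω} := by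
    have := measurable_measure_prodMk_right (μ := μ) hS
    convert this using 2
    rfl
  have hlhs : ∫ t in Ioi (0:ℝ), Real.exp (-s * t) * g t
      = (∫⁻ t in Ioi (0:ℝ),
          ENNReal.ofReal (Real.exp (-s * t)) * μ {ω | Y ω < t ∧ t < X ω + Y ω}).toReal / E := by
    simp_rw [hg, ← mul_div_assoc]
    rw [integral_div, integral_eq_lintegral_of_nonneg_ae]
    · congr 2
      apply lintegral_congr fun t => ?_
      rw [ENNReal.ofReal_mul (Real.exp_pos _).le, ENNReal.ofReal_toReal (measure_ne_top μ _)]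
    · filter_upwards with t
      positivity
    · exact ((Real.measurable_exp.comp (measurable_id.const_mul (-s))).mul
        hmt.ennreal_toReal).aestronglyMeasurable
  rw [hlhs, key, hrhs, div_div]
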